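/- Let r > 0 and let (q^{(n)})_{n≥1} be a universal projector sequence with asymptotic rate r, i.e. orthogonal projections q^{(n)} ∈ M_n with (1/n)·log₂ tr(q^{(n)}) → r and tr(q^{(n)} ρ_n) → 1 for every consistent, stationary, ergodic quantum source (ρ_n) whose von Neumann entropy rate exists and is below r. Let (ρ_n)_{n≥1} be any consistent, stationary, ergodic quantum source whose von Neumann entropy rate exists and is strictly less than r, assume 0 < tr(q^{(n)}) < d^n for all n, and for each n fix a unit vector w^{(n)} in the range of q^{(n)} and an orthonormal basis (v^{(n)}_1,…,v^{(n)}_{K_n}) of the kernel of q^{(n)}. Then the entanglement fidelity of the projection compression scheme, given by the intrinsic formula F_e^{(n)} := |tr(ρ_n q^{(n)})|² + ∑_{k=1}^{K_n} |tr(ρ_n · w^{(n)}(v^{(n)}_k)†)|², satisfies F_e^{(n)} → 1 as n → ∞, and the compression rate (1/n)·log₂ tr(q^{(n)}) tends to r. -/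

import Mathlib

open Matrix Finset Filter Topology
open scoped ComplexOrder

noncomputable section

/-- `Mat d m` is the algebra of operators on the `m`-fold tensor power of `ℂ^d`,
realized as matrices indexed by words `Fin m → Fin d`. -/
abbrev Mat (d m : ℕ) : Type := Matrix (Fin m → Fin d) (Fin m → Fin d) ℂ

/-- Kronecker (tensor) product `A ⊗ B` of `A : Mat d m` and `B : Mat d i`. -/
def tens {d m i : ℕ} (A : Mat d m) (B : Mat d i) : Mat d (m + i) :=
  Matrix.of fun x y =>
    A (fun k => x (Fin.castAdd i k)) (fun k => y (Fin.castAdd i k)) *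
    B (fun k => x (Fin.natAdd m k)) (fun k => y (Fin.natAdd m k))

/-- A quantum source: each `ρ m` (for `m ≥ 1`) is positive semidefinite with trace 1. -/
def IsQSource (d : ℕ) (ρ : ∀ m, Mat d m) : Prop :=
  ∀ m, 1 ≤ m → (ρ m).PosSemidef ∧ (ρ m).trace = 1

/-- Consistency: `tr(ρ_m a) = tr(ρ_{m+i} (a ⊗ I^{⊗i}))`. -/
def QConsistent (d : ℕ) (ρ : ∀ m, Mat d m) : Prop :=
  ∀ m i, 1 ≤ m → 1 ≤ i → ∀ a : Mat d m,
    (ρ m * a).trace = (ρ (m + i) * tens a (1 : Mat d i)).trace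

/-- Stationarity: `tr(ρ_m a) = tr(ρ_{i+m} (I^{⊗i} ⊗ a))`. -/
def QStationary (d : ℕ) (ρ : ∀ m, Mat d m) : Prop :=
  ∀ m i, 1 ≤ m → 1 ≤ i → ∀ a : Mat d m,
    (ρ m * a).trace = (ρ (i + m) * tens (1 : Mat d i) a).trace

/-- Ergodicity: Cesàro averages of `tr(ρ_{m+i} (a ⊗ I^{⊗(i-m)} ⊗ b))` converge to
`tr(ρ_m a)·tr(ρ_m b)`. -/
def QErgodic (d : ℕ) (ρ : ∀ m, Mat d m) : Prop :=
  ∀ m, 1 ≤ m → ∀ a b : Mat d m,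
    Tendsto (fun n : ℕ =>
        (n : ℂ)⁻¹ * ∑ i ∈ Finset.Icc m n,
          (ρ (m + (i - m) + m) * tens (tens a (1 : Mat d (i - m))) b).trace)
      atTop (nhds ((ρ m * a).trace * (ρ m * b).trace))

/-- Weak mixing. -/
def QWeakMixing (d : ℕ) (ρ : ∀ m, Mat d m) : Prop :=
  ∀ m, 1 ≤ m → ∀ a b : Mat d m,
    Tendsto (fun n : ℕ =>
        (n : ℝ)⁻¹ * ∑ i ∈ Finset.Icc m n,
          norm ((ρ (m + (i - m) + m) * tens (tens a (1 : Mat d (i - m))) b).trace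
            - (ρ m * a).trace * (ρ m * b).trace))
      atTop (nhds 0)

/-- Strong mixing. -/
def QStrongMixing (d : ℕ) (ρ : ∀ m, Mat d m) : Prop :=
  ∀ m, 1 ≤ m → ∀ a b : Mat d m,
    Tendsto (fun i : ℕ =>
        (ρ (m + (i - m) + m) * tens (tens a (1 : Mat d (i - m))) b).trace)
      atTop (nhds ((ρ m * a).trace * (ρ m * b).trace))

/-- The `m`-fold elementary tensor `A_{j 1} ⊗ ⋯ ⊗ A_{j m}` of Kraus operators. -/
def krausPow {d : ℕ} {J : Type} [Fintype J] (A : J → Matrix (Fin d) (Fin d) ℂ)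
    {m : ℕ} (j : Fin m → J) : Mat d m :=
  Matrix.of fun x y => ∏ k, A (j k) (x k) (y k)

/-- The induced map `E^{⊗m}` of a memoryless channel with Kraus operators `A`. -/
def channelPow {d : ℕ} {J : Type} [Fintype J] (A : J → Matrix (Fin d) (Fin d) ℂ)
    (m : ℕ) (σ : Mat d m) : Mat d m :=
  ∑ j : Fin m → J, krausPow A j * σ * (krausPow A j)ᴴ

/-- A classical source on alphabet `Fin d`: each `p m` (for `m ≥ 1`) is a
probability distribution on words of length `m`. -/
def IsCSource (d : ℕ) (p : ∀ m, (Fin m → Fin d) → ℝ) : Prop :=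
  ∀ m, 1 ≤ m → (∀ x, 0 ≤ p m x) ∧ ∑ x, p m x = 1

def CConsistent (d : ℕ) (p : ∀ m, (Fin m → Fin d) → ℝ) : Prop :=
  ∀ m i, 1 ≤ m → 1 ≤ i → ∀ x : Fin m → Fin d,
    p m x = ∑ y : Fin i → Fin d, p (m + i) (Fin.append x y)

def CStationary (d : ℕ) (p : ∀ m, (Fin m → Fin d) → ℝ) : Prop :=
  ∀ m i, 1 ≤ m → 1 ≤ i → ∀ x : Fin m → Fin d,
    p m x = ∑ y : Fin i → Fin d, p (i + m) (Fin.append y x)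

def CErgodic (d : ℕ) (p : ∀ m, (Fin m → Fin d) → ℝ) : Prop :=
  ∀ m, 1 ≤ m → ∀ x y : Fin m → Fin d,
    Tendsto (fun n : ℕ =>
        (n : ℝ)⁻¹ * ∑ i ∈ Finset.Icc m n,
          ∑ z : Fin (i - m) → Fin d, p (m + (i - m) + m) (Fin.append (Fin.append x z) y))
      atTop (nhds (p m x * p m y))

def CWeakMixing (d : ℕ) (p : ∀ m, (Fin m → Fin d) → ℝ) : Prop :=
  ∀ m, 1 ≤ m → ∀ x y : Fin m → Fin d,
    Tendsto (fun n : ℕ =>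
        (n : ℝ)⁻¹ * ∑ i ∈ Finset.Icc m n,
          |(∑ z : Fin (i - m) → Fin d, p (m + (i - m) + m) (Fin.append (Fin.append x z) y))
            - p m x * p m y|)
      atTop (nhds 0)

def CStrongMixing (d : ℕ) (p : ∀ m, (Fin m → Fin d) → ℝ) : Prop :=
  ∀ m, 1 ≤ m → ∀ x y : Fin m → Fin d,
    Tendsto (fun i : ℕ =>
        ∑ z : Fin (i - m) → Fin d, p (m + (i - m) + m) (Fin.append (Fin.append x z) y))
      atTop (nhds (p m x * p m y))

/-- The classically correlated state `∑_x p(x) · ψ_{x 1}ψ_{x 1}† ⊗ ⋯ ⊗ ψ_{x m}ψ_{x m}†`. -/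
def clsState {d : ℕ} (ψ : Fin d → Fin d → ℂ) {m : ℕ} (pm : (Fin m → Fin d) → ℝ) : Mat d m :=
  ∑ x : Fin m → Fin d, (pm x : ℂ) •
    Matrix.of (fun u v => ∏ k, ψ (x k) (u k) * star (ψ (x k) (v k)))

/-- The probability `⟨u_{x 1} ⊗ ⋯ ⊗ u_{x m}, ρ (u_{x 1} ⊗ ⋯ ⊗ u_{x m})⟩` of
measurement outcome `x` in the product basis built from `u`. -/
def measProb {d m : ℕ} (ρ : Mat d m) (u : Fin d → Fin d → ℂ) (x : Fin m → Fin d) : ℝ :=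
  (∑ v : Fin m → Fin d, ∑ w : Fin m → Fin d,
    star (∏ k, u (x k) (v k)) * ρ v w * ∏ k, u (x k) (w k)).re

/-- Von Neumann entropy (base-2) of a Hermitian matrix, via its eigenvalues;
junk value `0` for non-Hermitian input.  The convention `0·log₂ 0 = 0` holds
automatically since `Real.logb 2 0 = 0`. -/
def vnEntropy {n : Type} [Fintype n] [DecidableEq n] (ρ : Matrix n n ℂ) : ℝ :=
  if h : ρ.IsHermitian then -∑ k, h.eigenvalues k * Real.logb 2 (h.eigenvalues k) else 0

namespace UCFaux

lemma sum_mulVec' {ι κ : Type*} [Fintype ι] [Fintype κ] (M : κ → Matrix ι ι ℂ) (z : ι → ℂ) :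
    (∑ k, M k) *ᵥ z = ∑ k, (M k) *ᵥ z := by
  ext a
  simp only [Matrix.mulVec, dotProduct, Matrix.sum_apply, Finset.sum_apply,
    Finset.sum_mul]
  rw [Finset.sum_comm]

lemma outer_mulVec {ι : Type*} [Fintype ι] (x y z : ι → ℂ) :
    (Matrix.of fun a b => x a * star (y b)) *ᵥ z = (∑ b, star (y b) * z b) • x := by
  ext a
  simp only [Matrix.mulVec, dotProduct, Matrix.of_apply, Pi.smul_apply, smul_eq_mul,
    Finset.sum_mul]
  exact Finset.sum_congr rfl fun b _ => by ring

lemma abs_trace_sq_le {ι : Type*} [Fintype ι] [DecidableEq ι] (ρ B : Matrix ι ι ℂ)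
    (hρ : ρ.PosSemidef) :
    norm ((ρ * B).trace) ^ 2 ≤ ρ.trace.re * ((ρ * (Bᴴ * B)).trace).re := by
  obtain ⟨S, hS, hSS⟩ : ∃ S : Matrix ι ι ℂ, S.PosSemidef ∧ S * S = ρ :=
    open scoped MatrixOrder in
    ⟨CFC.sqrt ρ, Matrix.nonneg_iff_posSemidef.mp (CFC.sqrt_nonneg ρ),
      CFC.sqrt_mul_sqrt_self ρ (Matrix.nonneg_iff_posSemidef.mpr hρ)⟩
  have hSH : Sᴴ = S := hS.1
  set T := B * S with hT
  have htr1 : (S * T).trace = (ρ * B).trace := by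
    rw [hT, ← Matrix.mul_assoc, Matrix.trace_mul_comm, ← Matrix.mul_assoc, hSS]
  have htr2 : (Tᴴ * T).trace = (ρ * (Bᴴ * B)).trace := by
    rw [hT, Matrix.conjTranspose_mul, hSH]
    simp only [Matrix.mul_assoc]
    rw [Matrix.trace_mul_comm]
    simp only [Matrix.mul_assoc]
    rw [hSS, ← Matrix.mul_assoc, Matrix.trace_mul_comm]
  have e1 : (S * T).trace = ∑ p : ι × ι, S p.1 p.2 * T p.2 p.1 := by
    rw [Fintype.sum_prod_type]
    simp [Matrix.trace, Matrix.diag, Matrix.mul_apply]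
  have e2 : norm ((S * T).trace)
      ≤ ∑ p : ι × ι, norm (S p.1 p.2) * norm (T p.2 p.1) := by
    rw [e1]
    refine (norm_sum_le _ _).trans ?_
    simp [norm_mul]
  have e3 := Finset.sum_mul_sq_le_sq_mul_sq Finset.univ
    (fun p : ι × ι => norm (S p.1 p.2)) (fun p => norm (T p.2 p.1))
  have e4 : ∑ p : ι × ι, norm (S p.1 p.2) ^ 2 = ρ.trace.re := by
    rw [← hSS, Matrix.trace, Fintype.sum_prod_type]
    simp only [Matrix.diag, Matrix.mul_apply, Complex.re_sum]
    refine Finset.sum_congr rfl fun a _ => Finset.sum_congr rfl fun b _ => ?_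
    have hba : S b a = (starRingEnd ℂ) (S a b) := by
      rw [← congrFun (congrFun hSH b) a, Matrix.conjTranspose_apply, Complex.star_def]
    rw [hba, Complex.mul_conj, Complex.ofReal_re, Complex.sq_norm]
  have e5 : ∑ p : ι × ι, norm (T p.2 p.1) ^ 2 = ((ρ * (Bᴴ * B)).trace).re := by
    rw [← htr2, Matrix.trace, Fintype.sum_prod_type]
    simp only [Matrix.diag, Matrix.mul_apply, Complex.re_sum, Matrix.conjTranspose_apply]
    refine Finset.sum_congr rfl fun a _ => Finset.sum_congr rfl fun b _ => ?_
    rw [show (star (T b a) : ℂ) * T b a = ((Complex.normSq (T b a) : ℝ) : ℂ) by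
      rw [mul_comm]; exact Complex.mul_conj _]
    rw [Complex.ofReal_re, Complex.sq_norm]
  calc norm ((ρ * B).trace) ^ 2
      = norm ((S * T).trace) ^ 2 := by rw [htr1]
    _ ≤ (∑ p : ι × ι, norm (S p.1 p.2) * norm (T p.2 p.1)) ^ 2 :=
        pow_le_pow_left₀ (norm_nonneg _) e2 2
    _ ≤ (∑ p : ι × ι, norm (S p.1 p.2) ^ 2) *
          ∑ p : ι × ι, norm (T p.2 p.1) ^ 2 := e3
    _ = ρ.trace.re * ((ρ * (Bᴴ * B)).trace).re := by rw [e4, e5]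

end UCFaux

open UCFaux

/-- for a universal projector sequence of rate `r` and any
consistent stationary ergodic source of entropy rate below `r`, the
entanglement fidelity of the projection compression scheme tends to `1`
and the compression rate tends to `r`. -/
theorem universal_compression_fidelity
    (d : ℕ) (hd : 2 ≤ d) (r : ℝ) (hr0 : 0 < r)
    (q : ∀ n, Mat d n)
    (hproj : ∀ n, 1 ≤ n → (q n).IsHermitian ∧ q n * q n = q n)
    (hrate : Tendsto (fun n : ℕ => Real.logb 2 ((q n).trace.re) / n) atTop (nhds r))
    (huniv : ∀ σ : ∀ m, Mat d m,
      IsQSource d σ → QConsistent d σ → QStationary d σ → QErgodic d σ →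
      (∃ s, s < r ∧ Tendsto (fun n : ℕ => vnEntropy (σ n) / n) atTop (nhds s)) →
      Tendsto (fun n : ℕ => (q n * σ n).trace) atTop (nhds 1))
    (ρ : ∀ m, Mat d m)
    (hρ : IsQSource d ρ) (hc : QConsistent d ρ) (hs : QStationary d ρ)
    (he : QErgodic d ρ)
    (hent : ∃ s, s < r ∧ Tendsto (fun n : ℕ => vnEntropy (ρ n) / n) atTop (nhds s))
    (htr : ∀ n, 0 < (q n).trace.re ∧ (q n).trace.re < (d : ℝ) ^ n)
    (K : ℕ → ℕ)
    (w : ∀ n, (Fin n → Fin d) → ℂ)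
    (hw_mem : ∀ n, (q n) *ᵥ (w n) = w n)
    (hw_unit : ∀ n, ∑ u, star (w n u) * w n u = 1)
    (v : ∀ n, Fin (K n) → (Fin n → Fin d) → ℂ)
    (hv_ker : ∀ n k, (q n) *ᵥ (v n k) = 0)
    (hv_on : ∀ n k l, ∑ u, star (v n k u) * v n l u = if k = l then (1 : ℂ) else 0)
    (hv_span : ∀ n (x : (Fin n → Fin d) → ℂ),
      (q n) *ᵥ x = 0 → x ∈ Submodule.span ℂ (Set.range (v n))) :
    Tendsto (fun n : ℕ =>
        norm ((ρ n * q n).trace) ^ 2 +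
          ∑ k : Fin (K n),
            norm ((ρ n * Matrix.of (fun a b => w n a * star (v n k b))).trace) ^ 2)
      atTop (nhds 1) ∧
    Tendsto (fun n : ℕ => Real.logb 2 ((q n).trace.re) / n) atTop (nhds r) := by
  refine ⟨?_, hrate⟩
  -- convergence of tr(ρ q)
  have ht : Tendsto (fun n : ℕ => (ρ n * q n).trace) atTop (nhds 1) := by
    have h := huniv ρ hρ hc hs he hent
    have heq : (fun n : ℕ => (ρ n * q n).trace) = fun n : ℕ => (q n * ρ n).trace :=
      funext fun n => Matrix.trace_mul_comm _ _
    rw [heq]; exact h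
  have habs2 : Tendsto (fun n : ℕ => norm ((ρ n * q n).trace) ^ 2) atTop (nhds 1) := by
    have h1 : Tendsto (fun n : ℕ => norm ((ρ n * q n).trace)) atTop (nhds 1) := by
      have := (continuous_norm.tendsto (1 : ℂ)).comp ht
      simpa [Function.comp_def] using this
    simpa using h1.pow 2
  refine tendsto_of_tendsto_of_tendsto_of_le_of_le' habs2 tendsto_const_nhds
    (Filter.Eventually.of_forall fun n =>
      le_add_of_nonneg_right (Finset.sum_nonneg fun k _ => sq_nonneg _)) ?_
  filter_upwards [eventually_ge_atTop 1] with n hn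
  obtain ⟨hpsd, htrρ⟩ := hρ n hn
  obtain ⟨hqH, hqq⟩ := hproj n hn
  set P : Mat d n := ∑ k : Fin (K n), Matrix.of (fun a b => v n k a * star (v n k b)) with hP
  -- P acts as the identity on the span of the v's
  have hPspan : ∀ x ∈ Submodule.span ℂ (Set.range (v n)), P *ᵥ x = x := by
    intro x hx
    induction hx using Submodule.span_induction with
    | mem x hx =>
      obtain ⟨l, rfl⟩ := hx
      rw [hP, sum_mulVec']
      simp only [outer_mulVec, hv_on]
      simp [ite_smul]
    | zero => simp
    | add x y _ _ hx hy => rw [Matrix.mulVec_add, hx, hy]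
    | smul a x _ hx => rw [Matrix.mulVec_smul, hx]
  -- P kills the range of q
  have hPq : ∀ x : (Fin n → Fin d) → ℂ, P *ᵥ (q n *ᵥ x) = 0 := by
    intro x
    have hcoef : ∀ k, ∑ b, star (v n k b) * (q n *ᵥ x) b = 0 := by
      intro k
      have hcol : ∀ c, ∑ b, star (v n k b) * q n b c = 0 := by
        intro c
        have h0 : (q n *ᵥ v n k) c = 0 := by rw [hv_ker n k]; rfl
        calc ∑ b, star (v n k b) * q n b c
            = star (∑ b, q n c b * v n k b) := by
              rw [star_sum]
              refine Finset.sum_congr rfl fun b _ => ?_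
              have hsq : star (q n c b) = q n b c := by
                rw [← congrFun (congrFun hqH b) c, Matrix.conjTranspose_apply]
              rw [star_mul', hsq]; ring
          _ = star ((q n *ᵥ v n k) c) := by rw [Matrix.mulVec]; rfl
          _ = 0 := by rw [h0, star_zero]
      calc ∑ b, star (v n k b) * (q n *ᵥ x) b
          = ∑ b, ∑ c, star (v n k b) * (q n b c * x c) := by
            refine Finset.sum_congr rfl fun b _ => ?_
            rw [Matrix.mulVec, dotProduct, Finset.mul_sum]
        _ = ∑ c, (∑ b, star (v n k b) * q n b c) * x c := by
            rw [Finset.sum_comm]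
            refine Finset.sum_congr rfl fun c _ => ?_
            rw [Finset.sum_mul]
            exact Finset.sum_congr rfl fun b _ => by ring
        _ = 0 := Finset.sum_eq_zero fun c _ => by rw [hcol c, zero_mul]
    rw [hP, sum_mulVec']
    refine Finset.sum_eq_zero fun k _ => ?_
    rw [outer_mulVec, hcoef k, zero_smul]
  -- completeness: q + P = 1
  have hone : ∀ x : (Fin n → Fin d) → ℂ, (q n + P) *ᵥ x = x := by
    intro x
    have h1 : q n *ᵥ (x - q n *ᵥ x) = 0 := by
      rw [Matrix.mulVec_sub, Matrix.mulVec_mulVec, hqq, sub_self]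
    have h2 : P *ᵥ (x - q n *ᵥ x) = x - q n *ᵥ x := hPspan _ (hv_span n _ h1)
    have h3 : P *ᵥ x = x - q n *ᵥ x := by
      have hx : P *ᵥ x = P *ᵥ (x - q n *ᵥ x) + P *ᵥ (q n *ᵥ x) := by
        rw [← Matrix.mulVec_add, sub_add_cancel]
      rw [hx, h2, hPq, add_zero]
    rw [Matrix.add_mulVec, h3]
    abel
  have hcomp : q n + P = 1 := by
    ext a b
    have h := congrFun (hone (Pi.single b 1)) a
    simp only [Matrix.mulVec_single, mul_one] at h
    simpa [Matrix.one_apply, Pi.single_apply] using h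
  -- Cauchy–Schwarz bound for each Kraus operator
  have htrre : (ρ n).trace.re = 1 := by rw [htrρ, Complex.one_re]
  have key : ∀ B : Mat d n,
      norm ((ρ n * B).trace) ^ 2 ≤ ((ρ n * (Bᴴ * B)).trace).re := by
    intro B
    have h := abs_trace_sq_le (ρ n) B hpsd
    rwa [htrre, one_mul] at h
  have hq2 : (q n)ᴴ * q n = q n := by rw [hqH.eq, hqq]
  have houter : ∀ k : Fin (K n),
      (Matrix.of (fun a b => w n a * star (v n k b)))ᴴ *
        (Matrix.of (fun a b => w n a * star (v n k b))) =
      Matrix.of (fun a b => v n k a * star (v n k b)) := by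
    intro k
    ext a b
    simp only [Matrix.mul_apply, Matrix.conjTranspose_apply, Matrix.of_apply, star_mul',
      star_star]
    calc ∑ c, star (w n c) * v n k a * (w n c * star (v n k b))
        = (v n k a * star (v n k b)) * ∑ c, star (w n c) * w n c := by
          rw [Finset.mul_sum]
          exact Finset.sum_congr rfl fun c _ => by ring
      _ = v n k a * star (v n k b) := by rw [hw_unit n, mul_one]
  calc norm ((ρ n * q n).trace) ^ 2 +
        ∑ k : Fin (K n),
          norm ((ρ n * Matrix.of (fun a b => w n a * star (v n k b))).trace) ^ 2
      ≤ ((ρ n * ((q n)ᴴ * q n)).trace).re +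
        ∑ k : Fin (K n),
          ((ρ n * ((Matrix.of (fun a b => w n a * star (v n k b)))ᴴ *
            Matrix.of (fun a b => w n a * star (v n k b)))).trace).re :=
        add_le_add (key (q n)) (Finset.sum_le_sum fun k _ => key _)
    _ = ((ρ n * (q n + P)).trace).re := by
        rw [hq2]
        simp only [houter]
        rw [Matrix.mul_add, Matrix.trace_add, Complex.add_re, hP, Finset.mul_sum,
          Matrix.trace_sum, Complex.re_sum]
    _ = 1 := by rw [hcomp, Matrix.mul_one, htrρ, Complex.one_re]
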